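/- For every matrix X ∈ 𝕏 and every r ∈ {1,…,n}: ‖X‖_* − ‖X‖_{(r)} = 0 if and only if rank(X) ≤ r, and likewise ‖X‖_* − H_r(X) = 0 if and only if rank(X) ≤ r, where H_r(X) = ∑_{i=1}^{r−1} σ_i(X) + √(∑_{i=r}^n σ_i(X)²). Moreover ‖X‖_* ≥ H_r(X) ≥ ‖X‖_{(r)} always. -/

import Mathlib

/-- Singular values of a real `n × m` matrix (in some order). -/
noncomputable def singVals {n m : ℕ} (X : Matrix (Fin n) (Fin m) ℝ) (i : Fin n) : ℝ :=
  Real.sqrt ((Matrix.isHermitian_mul_conjTranspose_self X).eigenvalues i)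

lemma sqrt_sum_sq_le {ι : Type*} (s : Finset ι) (f : ι → ℝ) (h : ∀ i ∈ s, 0 ≤ f i) :
    Real.sqrt (∑ i ∈ s, f i ^ 2) ≤ ∑ i ∈ s, f i := by
  have hs : 0 ≤ ∑ i ∈ s, f i := Finset.sum_nonneg h
  rw [show ∑ i ∈ s, f i = Real.sqrt ((∑ i ∈ s, f i) ^ 2) from (Real.sqrt_sq hs).symm]
  apply Real.sqrt_le_sqrt
  calc ∑ i ∈ s, f i ^ 2 ≤ ∑ i ∈ s, f i * (∑ j ∈ s, f j) := by
        apply Finset.sum_le_sum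
        intro i hi
        have := Finset.single_le_sum h hi
        nlinarith [h i hi]
    _ = (∑ i ∈ s, f i) ^ 2 := by rw [← Finset.sum_mul]; ring

lemma sqrt_sum_sq_lt {ι : Type*} (s : Finset ι) (f : ι → ℝ) (h : ∀ i ∈ s, 0 ≤ f i)
    (a b : ι) (ha : a ∈ s) (hb : b ∈ s) (hab : a ≠ b) (hfa : 0 < f a) (hfb : 0 < f b) :
    Real.sqrt (∑ i ∈ s, f i ^ 2) < ∑ i ∈ s, f i := by
  have hs : 0 ≤ ∑ i ∈ s, f i := Finset.sum_nonneg h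
  rw [show ∑ i ∈ s, f i = Real.sqrt ((∑ i ∈ s, f i) ^ 2) from (Real.sqrt_sq hs).symm]
  apply Real.sqrt_lt_sqrt (Finset.sum_nonneg fun i hi => sq_nonneg _)
  have key : ∑ i ∈ s, f i ^ 2 < ∑ i ∈ s, f i * (∑ j ∈ s, f j) := by
    apply Finset.sum_lt_sum
    · intro i hi
      have := Finset.single_le_sum h hi
      nlinarith [h i hi]
    · refine ⟨a, ha, ?_⟩
      have hlt : f a < ∑ j ∈ s, f j :=
        Finset.single_lt_sum hab.symm ha hb hfb (fun k hk _ => h k hk)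
      nlinarith
  calc ∑ i ∈ s, f i ^ 2 < ∑ i ∈ s, f i * (∑ j ∈ s, f j) := key
    _ = (∑ i ∈ s, f i) ^ 2 := by rw [← Finset.sum_mul]; ring

/-- let `σ 0 ≥ σ 1 ≥ ⋯ ≥ σ (n-1) ≥ 0` be the ordered singular values of
`X` (so `rank X` is the number of nonzero `σ i`), and let
`H_r(X) = ∑_{i<r-1} σ i + √(∑_{i≥r-1} σ i²)` (1-indexed: `∑_{i=1}^{r-1} σ_i +
√(∑_{i=r}^n σ_i²)`). Then `‖X‖_* − ‖X‖_{(r)} = 0 ↔ rank X ≤ r`,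
`‖X‖_* − H_r(X) = 0 ↔ rank X ≤ r`, and `‖X‖_{(r)} ≤ H_r(X) ≤ ‖X‖_*`. -/
theorem stmt14 (n m r : ℕ) (hnm : n ≤ m) (hr1 : 1 ≤ r) (hrn : r ≤ n)
    (X : Matrix (Fin n) (Fin m) ℝ) (σ : Fin n → ℝ)
    (hperm : ∃ e : Equiv.Perm (Fin n), ∀ i, σ i = singVals X (e i))
    (hmono : Antitone σ) (hnonneg : ∀ i, 0 ≤ σ i)
    (hrank : X.rank = (Finset.univ.filter fun i : Fin n => σ i ≠ 0).card) :
    ((∑ i, σ i) - (∑ i ∈ Finset.univ.filter (fun i : Fin n => i.1 < r), σ i) = 0 ↔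
        X.rank ≤ r) ∧
    ((∑ i, σ i) -
        ((∑ i ∈ Finset.univ.filter (fun i : Fin n => i.1 < r - 1), σ i) +
          Real.sqrt (∑ i ∈ Finset.univ.filter (fun i : Fin n => r - 1 ≤ i.1), (σ i) ^ 2))
        = 0 ↔ X.rank ≤ r) ∧
    (∑ i ∈ Finset.univ.filter (fun i : Fin n => i.1 < r), σ i) ≤
      (∑ i ∈ Finset.univ.filter (fun i : Fin n => i.1 < r - 1), σ i) +
        Real.sqrt (∑ i ∈ Finset.univ.filter (fun i : Fin n => r - 1 ≤ i.1), (σ i) ^ 2) ∧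
    (∑ i ∈ Finset.univ.filter (fun i : Fin n => i.1 < r - 1), σ i) +
        Real.sqrt (∑ i ∈ Finset.univ.filter (fun i : Fin n => r - 1 ≤ i.1), (σ i) ^ 2) ≤
      ∑ i, σ i := by
  -- j0 : index r-1
  have hj0 : r - 1 < n := by omega
  set j0 : Fin n := ⟨r - 1, hj0⟩ with hj0def
  -- key equivalence: rank ≤ r ↔ σ vanishes from index r on
  have hE : X.rank ≤ r ↔ ∀ i : Fin n, r ≤ i.1 → σ i = 0 := by
    constructor
    · intro hle i hi
      by_contra hne
      have hpos : 0 < σ i := lt_of_le_of_ne (hnonneg i) (Ne.symm hne)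
      have hsub : Finset.Iic i ⊆ Finset.univ.filter fun j : Fin n => σ j ≠ 0 := by
        intro j hj
        simp only [Finset.mem_Iic] at hj
        simp only [Finset.mem_filter, Finset.mem_univ, true_and]
        have : σ i ≤ σ j := hmono hj
        exact (lt_of_lt_of_le hpos this).ne'
      have hcard := Finset.card_le_card hsub
      rw [Fin.card_Iic] at hcard
      omega
    · intro hz
      rw [hrank]
      have hsub : (Finset.univ.filter fun j : Fin n => σ j ≠ 0) ⊆
          Finset.univ.filter fun j : Fin n => j.1 < r := by
        intro j hj
        simp only [Finset.mem_filter, Finset.mem_univ, true_and] at hj ⊢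
        by_contra hge
        exact hj (hz j (by omega))
      have hcard := Finset.card_le_card hsub
      refine hcard.trans ?_
      have : (Finset.univ.filter fun j : Fin n => j.1 < r).card ≤ (Finset.range r).card := by
        apply Finset.card_le_card_of_injOn (fun j => j.1)
        · intro j hj
          simp only [Finset.mem_coe, Finset.coe_filter, Set.mem_setOf_eq, Finset.mem_filter, Finset.mem_univ, true_and] at hj
          simpa using hj
        · intro a _ b _ hab
          exact Fin.ext hab
      simpa using this
  -- splits of the sums
  have hsplit1 : (∑ i, σ i) = (∑ i ∈ Finset.univ.filter (fun i : Fin n => i.1 < r), σ i)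
      + ∑ i ∈ Finset.univ.filter (fun i : Fin n => ¬ i.1 < r), σ i :=
    (Finset.sum_filter_add_sum_filter_not _ _ _).symm
  have hsplit2 : (∑ i, σ i) = (∑ i ∈ Finset.univ.filter (fun i : Fin n => i.1 < r - 1), σ i)
      + ∑ i ∈ Finset.univ.filter (fun i : Fin n => ¬ i.1 < r - 1), σ i :=
    (Finset.sum_filter_add_sum_filter_not _ _ _).symm
  have hfilt : (Finset.univ.filter (fun i : Fin n => ¬ i.1 < r - 1)) =
      Finset.univ.filter (fun i : Fin n => r - 1 ≤ i.1) := by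
    apply Finset.filter_congr; intro i _; simp [Nat.not_lt]
  rw [hfilt] at hsplit2
  set s3 : Finset (Fin n) := Finset.univ.filter (fun i : Fin n => r - 1 ≤ i.1) with hs3
  have hj0s3 : j0 ∈ s3 := by simp [hs3]; show r ≤ r - 1 + 1; omega
  have hnn3 : ∀ i ∈ s3, 0 ≤ σ i := fun i _ => hnonneg i
  -- first iff
  have hfirst : (∑ i, σ i) - (∑ i ∈ Finset.univ.filter (fun i : Fin n => i.1 < r), σ i) = 0 ↔
      X.rank ≤ r := by
    rw [hE, hsplit1]
    have : (∑ i ∈ Finset.univ.filter (fun i : Fin n => i.1 < r), σ i)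
        + (∑ i ∈ Finset.univ.filter (fun i : Fin n => ¬ i.1 < r), σ i)
        - (∑ i ∈ Finset.univ.filter (fun i : Fin n => i.1 < r), σ i)
        = ∑ i ∈ Finset.univ.filter (fun i : Fin n => ¬ i.1 < r), σ i := by ring
    rw [this, Finset.sum_eq_zero_iff_of_nonneg (fun i _ => hnonneg i)]
    constructor
    · intro h i hi
      exact h i (by simp only [Finset.mem_filter, Finset.mem_univ, true_and]; omega)
    · intro h i hi
      simp only [Finset.mem_filter, Finset.mem_univ, true_and, Nat.not_lt] at hi
      exact h i hi
  refine ⟨hfirst, ?_, ?_, ?_⟩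
  · -- second iff
    rw [hE, hsplit2]
    have hrw : (∑ i ∈ Finset.univ.filter (fun i : Fin n => i.1 < r - 1), σ i)
        + (∑ i ∈ s3, σ i)
        - ((∑ i ∈ Finset.univ.filter (fun i : Fin n => i.1 < r - 1), σ i)
          + Real.sqrt (∑ i ∈ s3, σ i ^ 2))
        = (∑ i ∈ s3, σ i) - Real.sqrt (∑ i ∈ s3, σ i ^ 2) := by ring
    rw [hrw]
    constructor
    · intro heq i hi
      by_contra hne
      have hpos : 0 < σ i := lt_of_le_of_ne (hnonneg i) (Ne.symm hne)
      have hposj0 : 0 < σ j0 := lt_of_lt_of_le hpos (hmono (by rw [Fin.le_def]; show r - 1 ≤ (i : ℕ); omega))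
      have hij0 : j0 ≠ i := by
        intro h
        apply absurd (congrArg Fin.val h)
        simp [hj0def]; omega
      have his3 : i ∈ s3 := by simp [hs3]; omega
      have := sqrt_sum_sq_lt s3 σ hnn3 j0 i hj0s3 his3 hij0 hposj0 hpos
      linarith
    · intro hz
      have hsum : (∑ i ∈ s3, σ i) = σ j0 := by
        apply Finset.sum_eq_single j0
        · intro b hb hbne
          apply hz
          simp only [hs3, Finset.mem_filter, Finset.mem_univ, true_and] at hb
          have : b.1 ≠ r - 1 := fun h => hbne (Fin.ext h)
          omega
        · intro h; exact absurd hj0s3 h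
      have hsumsq : (∑ i ∈ s3, σ i ^ 2) = σ j0 ^ 2 := by
        apply Finset.sum_eq_single j0
        · intro b hb hbne
          have : σ b = 0 := by
            apply hz
            simp only [hs3, Finset.mem_filter, Finset.mem_univ, true_and] at hb
            have : b.1 ≠ r - 1 := fun h => hbne (Fin.ext h)
            omega
          simp [this]
        · intro h; exact absurd hj0s3 h
      rw [hsum, hsumsq, Real.sqrt_sq (hnonneg j0)]
      ring
  · -- Ky-Fan ≤ H
    have hsplitky : (Finset.univ.filter (fun i : Fin n => i.1 < r)) =
        insert j0 (Finset.univ.filter (fun i : Fin n => i.1 < r - 1)) := by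
      ext i
      simp only [Finset.mem_insert, Finset.mem_filter, Finset.mem_univ, true_and]
      constructor
      · intro h
        by_cases hc : i.1 < r - 1
        · exact Or.inr hc
        · exact Or.inl (Fin.ext (show i.1 = r - 1 by omega))
      · rintro (rfl | h)
        · show r - 1 < r; omega
        · omega
    rw [hsplitky, Finset.sum_insert (by simp; show r ≤ r - 1 + 1; omega)]
    have hle : σ j0 ≤ Real.sqrt (∑ i ∈ s3, σ i ^ 2) := by
      rw [show σ j0 = Real.sqrt (σ j0 ^ 2) from (Real.sqrt_sq (hnonneg j0)).symm]
      apply Real.sqrt_le_sqrt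
      exact Finset.single_le_sum (fun i _ => sq_nonneg (σ i)) hj0s3
    linarith
  · -- H ≤ total
    rw [hsplit2]
    have := sqrt_sum_sq_le s3 σ hnn3
    linarith
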